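/- For all μ > 0, τ > 0, and every integer k ≥ 1, sup_{0 ≤ λ ≤ 1/τ} λ^μ (1−τλ)^k ≤ (μ/(τ e))^μ · k^{-μ}. -/

import Mathlib

lemma aux_texp (μ t : ℝ) (hμ : 0 < μ) (ht : 0 ≤ t) :
    t ^ μ * Real.exp (-t) ≤ μ ^ μ * Real.exp (-μ) := by
  rcases eq_or_lt_of_le ht with h | h
  · rw [← h, Real.zero_rpow hμ.ne', zero_mul]
    positivity
  · rw [Real.rpow_def_of_pos h, Real.rpow_def_of_pos hμ, ← Real.exp_add, ← Real.exp_add,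
      Real.exp_le_exp]
    have hlog := Real.log_le_sub_one_of_pos (div_pos h hμ)
    rw [Real.log_div h.ne' hμ.ne'] at hlog
    have h1 := mul_le_mul_of_nonneg_left hlog hμ.le
    have h2 : μ * (t / μ - 1) = t - μ := by field_simp
    nlinarith

theorem landweber_weighted_residual_bound (μ τ : ℝ) (hμ : 0 < μ) (hτ : 0 < τ)
    (k : ℕ) (hk : 1 ≤ k) :
    ∀ l ∈ Set.Icc (0:ℝ) (1 / τ),
      l ^ μ * (1 - τ * l) ^ k ≤ (μ / (τ * Real.exp 1)) ^ μ * (k : ℝ) ^ (-μ) := by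
  intro l hl
  obtain ⟨hl0, hl1⟩ := hl
  have hk0 : (0:ℝ) < (k : ℝ) := by exact_mod_cast Nat.lt_of_lt_of_le Nat.zero_lt_one hk
  have hτl : τ * l ≤ 1 := by
    have := (le_div_iff₀ hτ).mp hl1
    linarith
  have h1 : (0:ℝ) ≤ 1 - τ * l := by linarith
  have hexp : (1 - τ * l) ≤ Real.exp (-(τ * l)) := by
    have := Real.add_one_le_exp (-(τ * l)); linarith
  have hpow : (1 - τ * l) ^ k ≤ Real.exp (-((k : ℝ) * (τ * l))) := by
    calc (1 - τ * l) ^ k ≤ (Real.exp (-(τ * l))) ^ k := pow_le_pow_left₀ h1 hexp k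
      _ = Real.exp (-((k : ℝ) * (τ * l))) := by
          rw [← Real.exp_nat_mul]; ring_nf
  set t := (k : ℝ) * (τ * l) with ht
  have ht0 : 0 ≤ t := by positivity
  have key := aux_texp μ t hμ ht0
  have hkt : (0:ℝ) < (k : ℝ) * τ := by positivity
  have hl_eq : l = t / ((k : ℝ) * τ) := by
    field_simp [ht]; ring
  have step1 : l ^ μ * (1 - τ * l) ^ k ≤ l ^ μ * Real.exp (-t) :=
    mul_le_mul_of_nonneg_left hpow (Real.rpow_nonneg hl0 μ)
  have step2 : l ^ μ * Real.exp (-t) ≤ μ ^ μ * Real.exp (-μ) / ((k : ℝ) * τ) ^ μ := by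
    rw [hl_eq, Real.div_rpow ht0 hkt.le]
    have heq : t ^ μ / ((k : ℝ) * τ) ^ μ * Real.exp (-t)
        = t ^ μ * Real.exp (-t) / ((k : ℝ) * τ) ^ μ := by ring
    rw [heq]
    gcongr
  have hRHS : (μ / (τ * Real.exp 1)) ^ μ * (k : ℝ) ^ (-μ)
      = μ ^ μ * Real.exp (-μ) / ((k : ℝ) * τ) ^ μ := by
    rw [Real.div_rpow hμ.le (by positivity), Real.mul_rpow hτ.le (Real.exp_pos 1).le,
      Real.mul_rpow hk0.le hτ.le, Real.rpow_neg hk0.le, Real.exp_one_rpow, Real.exp_neg]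
    have h1 : (0:ℝ) < τ ^ μ := Real.rpow_pos_of_pos hτ μ
    have h2 : (0:ℝ) < (k : ℝ) ^ μ := Real.rpow_pos_of_pos hk0 μ
    have h3 : (0:ℝ) < Real.exp μ := Real.exp_pos μ
    field_simp
  rw [hRHS]
  exact step1.trans step2
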